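/- Let F be a field and β ∈ F with β ∉ {0, −1} and with h'(a,b) + β ≠ 0 for every Boolean assignment (a,b) ∈ {0,1}^{X∪Y} (this holds, e.g., when char F = 0 and β = 1, and when char F = p > 0 and β lies outside the prime subfield). Let g ∈ F[X,Y] be the unique multilinear polynomial agreeing with 1/(h' + β) on the Boolean hypercube. Then for every k ∈ [n^{2(1−1/c)}/c], the family of coefficient polynomials {g_m : m a set-multilinear monomial over X^{(k)}} (where g = ∑_m m·g_m over monomials m in the X^{(k)}-variables, g_m ∈ F[(X∖X^{(k)}) ∪ Y]) consists of n² algebraically independent polynomials over F; in particular alg-rank_{X^{(k)}}(g) ≥ n². -/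

import Mathlib

open MvPolynomial

section Helpers

lemma aeval_eq_eval' {σ F : Type*} [CommSemiring F] (b : σ → F) (p : MvPolynomial σ F) :
    aeval b p = eval b p := by
  rw [aeval_def, Algebra.algebraMap_self]; rfl

lemma eval_aeval' {σ F : Type*} [CommSemiring F] (b : σ → F) (f : σ → MvPolynomial σ F)
    (p : MvPolynomial σ F) :
    eval b (aeval f p) = eval (fun v => eval b (f v)) p := by
  rw [← aeval_eq_eval' b (aeval f p), comp_aeval_apply]
  have h : (fun i => aeval b (f i)) = fun i => eval b (f i) := funext fun i => aeval_eq_eval' _ _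
  rw [h, aeval_eq_eval']

lemma degreeOf_prod_pow_le' {σ F : Type*} [CommRing F] [Nontrivial F] [DecidableEq σ]
    (f : σ → MvPolynomial σ F) (hf : ∀ w, (∃ c : F, f w = C c) ∨ f w = X w)
    (s : σ →₀ ℕ) (v : σ) (t : Finset σ) :
    degreeOf v (∏ w ∈ t, f w ^ s w) ≤ if v ∈ t then s v else 0 := by
  classical
  induction t using Finset.induction_on with
  | empty =>
      simp only [Finset.prod_empty, Finset.notMem_empty, if_false]
      rw [show (1 : MvPolynomial σ F) = C 1 from (C_1).symm, degreeOf_C]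
  | @insert w t hw ih =>
      rw [Finset.prod_insert hw]
      refine (degreeOf_mul_le _ _ _).trans ?_
      have h1 : degreeOf v (f w ^ s w) ≤ if v = w then s v else 0 := by
        rcases hf w with ⟨cst, hcst⟩ | hX
        · rw [hcst, ← C_pow, degreeOf_C]
          exact Nat.zero_le _
        · rw [hX, X_pow_eq_monomial, degreeOf_le_iff]
          intro mm hmm
          rw [support_monomial, if_neg (one_ne_zero' F), Finset.mem_singleton] at hmm
          subst hmm
          rcases eq_or_ne v w with rfl | hne
          · simp [Finsupp.single_apply]
          · rw [Finsupp.single_apply, if_neg (Ne.symm hne), if_neg hne]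
      by_cases hvw : v = w
      · subst hvw
        simp only [Finset.mem_insert, true_or, if_true]
        have h2 : degreeOf v (∏ x ∈ t, f x ^ s x) ≤ 0 := by
          simpa [hw] using ih
        have h1' : degreeOf v (f v ^ s v) ≤ s v := by simpa using h1
        omega
      · have h1' : degreeOf v (f w ^ s w) ≤ 0 := by simpa [hvw] using h1
        have heq : (if v ∈ insert w t then s v else 0) = (if v ∈ t then s v else 0) := by
          simp [Finset.mem_insert, hvw]
        rw [heq]
        omega

lemma degreeOf_aeval_le' {σ F : Type*} [CommRing F] [Nontrivial F]
    (f : σ → MvPolynomial σ F) (hf : ∀ w, (∃ c : F, f w = C c) ∨ f w = X w)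
    (p : MvPolynomial σ F) (v : σ) : degreeOf v (aeval f p) ≤ degreeOf v p := by
  classical
  conv_lhs => rw [← support_sum_monomial_coeff p]
  rw [map_sum]
  refine (degreeOf_sum_le _ _ _).trans (Finset.sup_le fun s hs => ?_)
  rw [aeval_monomial]
  refine (degreeOf_mul_le _ _ _).trans ?_
  have h1 : degreeOf v ((algebraMap F (MvPolynomial σ F)) (coeff s p)) = 0 := by
    rw [algebraMap_eq, degreeOf_C]
  have h2 : degreeOf v (s.prod fun w e => f w ^ e) ≤ s v := by
    rw [Finsupp.prod]
    refine le_trans (degreeOf_prod_pow_le' f hf s v s.support) ?_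
    by_cases h : v ∈ s.support <;> simp [h]
  have h3 : s v ≤ degreeOf v p := by
    rw [degreeOf_eq_sup]
    exact Finset.le_sup (f := fun m => m v) hs
  omega

lemma multilinear_eq_zero' {σ F : Type*} [CommRing F]
    (p : MvPolynomial σ F) (hml : ∀ v, p.degreeOf v ≤ 1)
    (h0 : ∀ b : σ → F, (∀ v, b v = 0 ∨ b v = 1) → eval b p = 0) : p = 0 := by
  classical
  by_contra hne
  obtain ⟨s₀, hs₀, hmin⟩ := Finset.exists_min_image p.support (fun s => s.support.card)
      (support_nonempty.mpr hne)
  set b : σ → F := fun v => if v ∈ s₀.support then 1 else 0 with hb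
  have hbB : ∀ v, b v = 0 ∨ b v = 1 := by
    intro v
    by_cases h : v ∈ s₀.support
    · right; simp only [hb]; rw [if_pos h]
    · left; simp only [hb]; rw [if_neg h]
  have hev := h0 b hbB
  rw [eval_eq] at hev
  have hexp : ∀ s ∈ p.support, ∀ v, s v ≤ 1 := by
    intro s hs v
    have := hml v
    rw [degreeOf_eq_sup] at this
    exact le_trans (Finset.le_sup (f := fun m => m v) hs) this
  have hterm : ∀ s ∈ p.support,
      (coeff s p * ∏ v ∈ s.support, b v ^ s v) = if s = s₀ then coeff s₀ p else 0 := by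
    intro s hs
    by_cases hsub : s.support ⊆ s₀.support
    · have hsupp : s.support = s₀.support :=
        Finset.eq_of_subset_of_card_le hsub (hmin s hs)
      have hss : s = s₀ := by
        ext v
        by_cases hv : v ∈ s.support
        · have hv' : v ∈ s₀.support := hsupp ▸ hv
          have e1 := Finsupp.mem_support_iff.mp hv
          have e2 := Finsupp.mem_support_iff.mp hv'
          have l1 := hexp s hs v
          have l2 := hexp s₀ hs₀ v
          omega
        · have hv' : v ∉ s₀.support := hsupp ▸ hv
          have e1 := Finsupp.notMem_support_iff.mp hv
          have e2 := Finsupp.notMem_support_iff.mp hv'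
          omega
      subst hss
      rw [if_pos rfl]
      have : ∏ v ∈ s.support, b v ^ s v = 1 := by
        refine Finset.prod_eq_one fun v hv => ?_
        have hbv : b v = 1 := by simp only [hb]; rw [if_pos (hsupp ▸ hv)]
        rw [hbv, one_pow]
      rw [this, mul_one]
    · obtain ⟨v, hv1, hv2⟩ := Finset.not_subset.mp hsub
      rw [if_neg (by rintro rfl; exact hv2 hv1)]
      refine mul_eq_zero_of_right _ (Finset.prod_eq_zero hv1 ?_)
      have hbv : b v = 0 := by simp only [hb]; rw [if_neg hv2]
      rw [hbv, zero_pow (Finsupp.mem_support_iff.mp hv1)]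
  rw [Finset.sum_congr rfl hterm, Finset.sum_ite_eq' p.support s₀ (fun _ => coeff s₀ p),
    if_pos hs₀] at hev
  exact (mem_support_iff.mp hs₀) hev

end Helpers



open MvPolynomial

/-- The polynomial `h' = ∑_k h_k`, where `h_k = ∑_m m · π_k(m)` sums over all
set-multilinear monomials `m` over `X^{(k)} = X_{1,k} ⊔ ⋯ ⊔ X_{c,k}`.
The x-variables are indexed by triples `(i, k, j) : Fin c × Fin K × Fin a`
(row `i`, block `k`, position `j`, with `a = n^{2/c}` the block size and
`K = n^{2(1-1/c)}/c` the number of blocks), and the y-variables by `Fin m × Fin m`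
(with `m = n`, so `|Y| = n²`).  A set-multilinear monomial over `X^{(k)}` is encoded by
a function `τ : Fin c → Fin a` picking one variable from each row, and `π k` is the
given bijection from these monomials to `Y`. -/
noncomputable def hPrime (F : Type*) [Field F] (c K a m : ℕ)
    (π : Fin K → ((Fin c → Fin a) ≃ (Fin m × Fin m))) :
    MvPolynomial ((Fin c × Fin K × Fin a) ⊕ (Fin m × Fin m)) F :=
  ∑ k : Fin K, ∑ τ : Fin c → Fin a,
    (∏ i : Fin c, X (Sum.inl (i, k, τ i))) * X (Sum.inr (π k τ))

/-- Partial evaluation of `g` obtained by substituting, for the variables of block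
`X^{(k)}`, the characteristic vector of `A ⊆ Fin c × Fin a`, and leaving every other
variable alone. -/
noncomputable def partialEvalBlockK {F : Type*} [Field F] {c K a m : ℕ}
    (g : MvPolynomial ((Fin c × Fin K × Fin a) ⊕ (Fin m × Fin m)) F)
    (k : Fin K) (A : Finset (Fin c × Fin a)) :
    MvPolynomial ((Fin c × Fin K × Fin a) ⊕ (Fin m × Fin m)) F :=
  aeval (fun v => match v with
    | Sum.inl p => if p.2.1 = k then (if (p.1, p.2.2) ∈ A then 1 else 0)
        else X (Sum.inl p)
    | Sum.inr y => X (Sum.inr y)) g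

/-- For a multilinear `g`, the coefficient polynomial `g_m` of the set-multilinear
monomial `m = ∏_i x_{i,k,τ(i)}` in the decomposition of `g` over monomials in the
`X^{(k)}`-variables, recovered by Möbius inversion over partial Boolean evaluations. -/
noncomputable def coeffPolySM {F : Type*} [Field F] {c K a m : ℕ}
    (g : MvPolynomial ((Fin c × Fin K × Fin a) ⊕ (Fin m × Fin m)) F)
    (k : Fin K) (τ : Fin c → Fin a) :
    MvPolynomial ((Fin c × Fin K × Fin a) ⊕ (Fin m × Fin m)) F :=
  ∑ A ∈ (Finset.univ.image (fun i : Fin c => (i, τ i))).powerset,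
    ((-1 : F) ^ (((Finset.univ.image (fun i : Fin c => (i, τ i))) \ A).card)) •
      partialEvalBlockK g k A

/-- For the unique multilinear polynomial `g` agreeing with `1/(h' + β)` on the Boolean
hypercube, and any block index `k`, the coefficient polynomials
`{g_m : m set-multilinear over X^{(k)}}` form a family of `n² = a^c` algebraically
independent polynomials over `F`; in particular `alg-rank_{X^{(k)}}(g) ≥ n²`. -/
theorem algIndep_coeffs_of_multilinear_inverse_hPrime
    {F : Type*} [Field F] (c K a m : ℕ) (hc : 3 < c) (hcard : a ^ c = m ^ 2)
    (π : Fin K → ((Fin c → Fin a) ≃ (Fin m × Fin m)))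
    (β : F) (hβ0 : β ≠ 0) (hβ1 : β ≠ -1)
    (hunsat : ∀ b : ((Fin c × Fin K × Fin a) ⊕ (Fin m × Fin m)) → F,
        (∀ v, b v = 0 ∨ b v = 1) → eval b (hPrime F c K a m π) + β ≠ 0)
    (g : MvPolynomial ((Fin c × Fin K × Fin a) ⊕ (Fin m × Fin m)) F)
    (hgml : ∀ v, g.degreeOf v ≤ 1)
    (hg : ∀ b : ((Fin c × Fin K × Fin a) ⊕ (Fin m × Fin m)) → F,
        (∀ v, b v = 0 ∨ b v = 1) →
        eval b g * (eval b (hPrime F c K a m π) + β) = 1)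
    (k : Fin K) :
    AlgebraicIndependent F (fun τ : Fin c → Fin a => coeffPolySM g k τ) := by

  classical
  have hβ1' : β + 1 ≠ 0 := by
    intro h
    exact hβ1 (eq_neg_of_add_eq_zero_left h)
  set c₀ : F := -(β * (β + 1))⁻¹ with hc₀def
  have hc₀ : c₀ ≠ 0 := by
    simp only [hc₀def, ne_eq, neg_eq_zero, inv_eq_zero, mul_eq_zero, not_or]
    exact ⟨hβ0, hβ1'⟩
  set M : ((Fin c × Fin K × Fin a) ⊕ (Fin m × Fin m)) →
      MvPolynomial ((Fin c × Fin K × Fin a) ⊕ (Fin m × Fin m)) F :=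
    Sum.elim (fun _ => 0) (fun y => X (Sum.inr y)) with hM
  have key : ∀ τ : Fin c → Fin a,
      aeval M (coeffPolySM g k τ) = C c₀ * X (Sum.inr (π k τ)) := by
    intro τ
    set D : Finset (Fin c × Fin a) := Finset.univ.image (fun i : Fin c => (i, τ i)) with hD
    have hDne : D.Nonempty := by
      refine ⟨(⟨0, by omega⟩, τ ⟨0, by omega⟩), ?_⟩
      rw [hD]
      exact Finset.mem_image_of_mem _ (Finset.mem_univ _)
    set fA : Finset (Fin c × Fin a) → ((Fin c × Fin K × Fin a) ⊕ (Fin m × Fin m)) →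
        MvPolynomial ((Fin c × Fin K × Fin a) ⊕ (Fin m × Fin m)) F :=
      fun A => Sum.elim
        (fun p => if p.2.1 = k then (if (p.1, p.2.2) ∈ A then 1 else 0) else 0)
        (fun y => X (Sum.inr y)) with hfA
    have hfACX : ∀ (A : Finset (Fin c × Fin a)) w,
        (∃ cc : F, fA A w = C cc) ∨ fA A w = X w := by
      intro A w
      cases w with
      | inl p =>
          left
          refine ⟨if p.2.1 = k then (if (p.1, p.2.2) ∈ A then 1 else 0) else 0, ?_⟩
          simp only [hfA, Sum.elim_inl]
          split_ifs <;> simp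
      | inr y => right; simp [hfA]
    have hφpe : ∀ A, aeval M (partialEvalBlockK g k A) = aeval (fA A) g := by
      intro A
      rw [partialEvalBlockK, comp_aeval_apply]
      refine congrArg (fun f => aeval f g) (funext fun v => ?_)
      cases v with
      | inl p =>
          by_cases hpk : p.2.1 = k
          · by_cases hpA : (p.1, p.2.2) ∈ A
            · simp [hfA, hpk, hpA]
            · simp [hfA, hpk, hpA]
          · simp [hfA, hpk, hM]
      | inr y => simp [hfA, hM]
    have hφc : aeval M (coeffPolySM g k τ) =
        ∑ A ∈ D.powerset, ((-1 : F) ^ ((D \ A).card)) • aeval (fA A) g := by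
      rw [coeffPolySM, map_sum]
      refine Finset.sum_congr rfl fun A hA => ?_
      rw [map_smul, hφpe]
    have hmlQ : ∀ v, degreeOf v
        (aeval M (coeffPolySM g k τ) - C c₀ * X (Sum.inr (π k τ))) ≤ 1 := by
      intro v
      have h1 : degreeOf v (aeval M (coeffPolySM g k τ)) ≤ 1 := by
        rw [hφc]
        refine (degreeOf_sum_le _ _ _).trans (Finset.sup_le fun A hA => ?_)
        rw [smul_eq_C_mul]
        refine (degreeOf_C_mul_le _ _ _).trans ?_
        exact (degreeOf_aeval_le' (fA A) (hfACX A) g v).trans (hgml v)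
      have h2 : degreeOf v (C (-c₀) * X (Sum.inr (π k τ))) ≤ 1 := by
        refine (degreeOf_C_mul_le _ _ _).trans ?_
        rw [degreeOf_X]
        split <;> omega
      have hrw : aeval M (coeffPolySM g k τ) - C c₀ * X (Sum.inr (π k τ)) =
          aeval M (coeffPolySM g k τ) + C (-c₀) * X (Sum.inr (π k τ)) := by
        rw [map_neg C c₀]
        ring
      rw [hrw]
      exact (degreeOf_add_le _ _ _).trans (max_le h1 h2)
    have hevQ : ∀ b : ((Fin c × Fin K × Fin a) ⊕ (Fin m × Fin m)) → F,
        (∀ v, b v = 0 ∨ b v = 1) →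
        eval b (aeval M (coeffPolySM g k τ) - C c₀ * X (Sum.inr (π k τ))) = 0 := by
      intro b hb
      set y₀ : F := b (Sum.inr (π k τ)) with hy₀
      have hbA : ∀ A : Finset (Fin c × Fin a), ∀ v,
          eval b (fA A v) = 0 ∨ eval b (fA A v) = 1 := by
        intro A v
        cases v with
        | inl p =>
            simp only [hfA, Sum.elim_inl]
            split_ifs <;> simp
        | inr y => simpa [hfA] using hb (Sum.inr y)
      have hH : ∀ A ∈ D.powerset,
          eval (fun v => eval b (fA A v)) (hPrime F c K a m π) =
            if A = D then y₀ else 0 := by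
        intro A hA
        have hAD : A ⊆ D := Finset.mem_powerset.mp hA
        rw [hPrime, map_sum, Finset.sum_eq_single k]
        · rw [map_sum]
          have hterm : ∀ τ' : Fin c → Fin a,
              eval (fun v => eval b (fA A v))
                ((∏ i : Fin c, X (Sum.inl (i, k, τ' i))) * X (Sum.inr (π k τ'))) =
              (if A = D ∧ τ' = τ then 1 else 0) * b (Sum.inr (π k τ')) := by
            intro τ'
            rw [map_mul, map_prod, eval_X]
            have hy' : eval b (fA A (Sum.inr (π k τ'))) = b (Sum.inr (π k τ')) := by
              simp [hfA]
            rw [hy']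
            congr 1
            have hX1 : ∀ i : Fin c,
                eval (fun v => eval b (fA A v)) (X (Sum.inl (i, k, τ' i))) =
                if (i, τ' i) ∈ A then 1 else 0 := by
              intro i
              rw [eval_X]
              simp only [hfA, Sum.elim_inl, if_true]
              split_ifs <;> simp
            rw [Finset.prod_congr rfl fun i _ => hX1 i, Finset.prod_boole]
            have hiff : (∀ i ∈ Finset.univ, (i, τ' i) ∈ A) ↔ (A = D ∧ τ' = τ) := by
              constructor
              · intro hall
                have hτ : τ' = τ := by
                  funext i
                  have h1 := hAD (hall i (Finset.mem_univ i))
                  rw [hD, Finset.mem_image] at h1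
                  obtain ⟨i', _, hi'⟩ := h1
                  rw [Prod.mk.injEq] at hi'
                  rw [← hi'.2, hi'.1]
                refine ⟨Finset.Subset.antisymm hAD ?_, hτ⟩
                rw [hD]
                intro x hx
                rw [Finset.mem_image] at hx
                obtain ⟨i, _, rfl⟩ := hx
                have := hall i (Finset.mem_univ i)
                rwa [hτ] at this
              · rintro ⟨rfl, rfl⟩ i _
                rw [hD, Finset.mem_image]
                exact ⟨i, Finset.mem_univ i, rfl⟩
            simp only [hiff]
          rw [Finset.sum_congr rfl fun τ' _ => hterm τ']
          rcases eq_or_ne A D with hADeq | hADeq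
          · rw [if_pos hADeq]
            simp only [hADeq, true_and]
            have hterm2 : ∀ τ' : Fin c → Fin a,
                (if τ' = τ then (1 : F) else 0) * b (Sum.inr (π k τ')) =
                if τ' = τ then b (Sum.inr (π k τ)) else 0 := by
              intro τ'
              split_ifs with h
              · rw [h, one_mul]
              · rw [zero_mul]
            rw [Finset.sum_congr rfl fun τ' _ => hterm2 τ',
              Finset.sum_ite_eq' Finset.univ τ (fun _ => b (Sum.inr (π k τ))),
              if_pos (Finset.mem_univ τ)]
          · rw [if_neg hADeq]
            simp [hADeq]
        · intro k' _ hk'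
          rw [map_sum]
          refine Finset.sum_eq_zero fun τ' _ => ?_
          rw [map_mul, map_prod]
          refine mul_eq_zero_of_left (Finset.prod_eq_zero
            (Finset.mem_univ (⟨0, by omega⟩ : Fin c)) ?_) _
          rw [eval_X]
          simp only [hfA, Sum.elim_inl]
          rw [if_neg hk']
          exact map_zero _
        · intro hk
          exact absurd (Finset.mem_univ k) hk
      have hG : ∀ A ∈ D.powerset,
          eval (fun v => eval b (fA A v)) g = (if A = D then β + y₀ else β)⁻¹ := by
        intro A hA
        have h := hg _ (hbA A)
        rw [hH A hA] at h
        rw [eq_inv_of_mul_eq_one_left h]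
        congr 1
        split_ifs
        · ring
        · ring
      have hLHS : eval b (aeval M (coeffPolySM g k τ)) =
          ∑ A ∈ D.powerset, (-1 : F) ^ ((D \ A).card) * (if A = D then β + y₀ else β)⁻¹ := by
        rw [hφc, map_sum]
        refine Finset.sum_congr rfl fun A hA => ?_
        rw [smul_eval, eval_aeval', hG A hA]
      have hsum : ∑ A ∈ D.powerset, (-1 : F) ^ ((D \ A).card) * (if A = D then β + y₀ else β)⁻¹
          = (β + y₀)⁻¹ - β⁻¹ := by
        rw [Finset.sum_eq_sum_sdiff_singleton_add (Finset.mem_powerset_self D)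
          (fun A => (-1 : F) ^ ((D \ A).card) * (if A = D then β + y₀ else β)⁻¹)]
        have hDD : ((D \ D).card) = 0 := by simp
        rw [if_pos rfl, hDD, pow_zero, one_mul]
        have hrest : ∑ A ∈ D.powerset \ {D},
            (-1 : F) ^ ((D \ A).card) * (if A = D then β + y₀ else β)⁻¹
            = (∑ A ∈ D.powerset \ {D}, (-1 : F) ^ ((D \ A).card)) * β⁻¹ := by
          rw [Finset.sum_mul]
          refine Finset.sum_congr rfl fun A hA => ?_
          rw [Finset.mem_sdiff, Finset.mem_singleton] at hA
          rw [if_neg hA.2]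
        rw [hrest]
        have hfull : ∑ A ∈ D.powerset, (-1 : F) ^ ((D \ A).card) = 0 := by
          have hre : ∑ A ∈ D.powerset, (-1 : F) ^ ((D \ A).card)
              = ∑ A ∈ D.powerset, (-1 : F) ^ A.card := by
            refine Finset.sum_nbij' (fun A => D \ A) (fun A => D \ A) ?_ ?_ ?_ ?_ ?_
            · intro A hA
              exact Finset.mem_powerset.mpr Finset.sdiff_subset
            · intro A hA
              exact Finset.mem_powerset.mpr Finset.sdiff_subset
            · intro A hA
              exact Finset.sdiff_sdiff_eq_self (Finset.mem_powerset.mp hA)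
            · intro A hA
              exact Finset.sdiff_sdiff_eq_self (Finset.mem_powerset.mp hA)
            · intro A hA
              rfl
          rw [hre]
          have h := Finset.sum_powerset_neg_one_pow_card_of_nonempty hDne
          have : ∑ A ∈ D.powerset, (-1 : F) ^ A.card
              = ((∑ A ∈ D.powerset, (-1 : ℤ) ^ A.card : ℤ) : F) := by
            push_cast
            rfl
          rw [this, h, Int.cast_zero]
        have hminus1 : ∑ A ∈ D.powerset \ {D}, (-1 : F) ^ ((D \ A).card) = -1 := by
          rw [Finset.sum_sdiff_eq_sub (Finset.singleton_subset_iff.mpr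
            (Finset.mem_powerset_self D)), hfull, Finset.sum_singleton, hDD, pow_zero]
          ring
        rw [hminus1]
        ring
      rw [map_sub, map_mul, eval_C, eval_X, hLHS, hsum, ← hy₀]
      rcases hb (Sum.inr (π k τ)) with h0 | h1
      · rw [← hy₀] at h0
        rw [h0]
        simp
      · rw [← hy₀] at h1
        rw [h1, hc₀def]
        field_simp
        ring
    have hQ := multilinear_eq_zero' _ hmlQ hevQ
    exact sub_eq_zero.mp hQ
  set M2 : ((Fin c × Fin K × Fin a) ⊕ (Fin m × Fin m)) →
      MvPolynomial ((Fin c × Fin K × Fin a) ⊕ (Fin m × Fin m)) F :=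
    fun v => C c₀⁻¹ * X v with hM2
  have hcomp : ∀ τ : Fin c → Fin a,
      ((aeval M2).comp (aeval M)) (coeffPolySM g k τ) = X (Sum.inr (π k τ)) := by
    intro τ
    rw [AlgHom.comp_apply, key τ, map_mul, aeval_C, aeval_X, algebraMap_eq, hM2]
    rw [← mul_assoc, ← C_mul, mul_inv_cancel₀ hc₀, C_1, one_mul]
  have hXind : AlgebraicIndependent F
      (fun τ : Fin c → Fin a =>
        (X (Sum.inr (π k τ)) : MvPolynomial ((Fin c × Fin K × Fin a) ⊕ (Fin m × Fin m)) F)) := by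
    have h1 := MvPolynomial.algebraicIndependent_X
      ((Fin c × Fin K × Fin a) ⊕ (Fin m × Fin m)) F
    exact h1.comp (fun τ => Sum.inr (π k τ))
      (fun τ1 τ2 h => (π k).injective (Sum.inr_injective h))
  refine AlgebraicIndependent.of_comp ((aeval M2).comp (aeval M)) ?_
  have hfun : ((aeval M2).comp (aeval M)) ∘ (fun τ : Fin c → Fin a => coeffPolySM g k τ)
      = fun τ => X (Sum.inr (π k τ)) := funext fun τ => hcomp τ
  rw [hfun]
  exact hXind
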